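/- Let X be a real Banach space, F a norming subspace of X*, and σ the σ(X,F) topology. If X has the F-MIP, then every nonempty σ-closed, norm-bounded, convex set K ⊆ X that has Property (R) is equal to the σ-closed convex hull of its set of farthest points b(K). -/

import Mathlib

open Metric Set Pointwise

/-- The farthest distance map `r_K(x) = sup {‖z - x‖ : z ∈ K}`. -/
noncomputable def rFar {X : Type*} [NormedAddCommGroup X] (K : Set X) (x : X) : ℝ :=
  sSup ((fun z => ‖z - x‖) '' K)

/-- `Q_K(x)`: the set of points of `K` farthest from `x`. -/
def QFar {X : Type*} [NormedAddCommGroup X] (K : Set X) (x : X) : Set X :=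
  {z ∈ K | ‖z - x‖ = rFar K x}

/-- `D(K)`: the set of points admitting a farthest point in `K`. -/
def DFar {X : Type*} [NormedAddCommGroup X] (K : Set X) : Set X :=
  {x | (QFar K x).Nonempty}

/-- `b(K)`: the set of farthest points of `K`. -/
def farPoints {X : Type*} [NormedAddCommGroup X] (K : Set X) : Set X :=
  ⋃ x ∈ DFar K, QFar K x

/-- The crescent `C(K, x, α) = {z ∈ K : ‖z - x‖ > r_K(x) - α}`. -/
def crescent {X : Type*} [NormedAddCommGroup X] (K : Set X) (x : X) (α : ℝ) : Set X :=
  {z ∈ K | rFar K x - α < ‖z - x‖}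

/-- Property (R): every crescent of `K` contains a farthest point of `K`. -/
def PropR {X : Type*} [NormedAddCommGroup X] (K : Set X) : Prop :=
  ∀ (x : X) (α : ℝ), 0 < α → ∃ z ∈ crescent K x α, z ∈ farPoints K

/-- A set is admissible if it is the intersection of all closed balls containing it. -/
def Admissible {X : Type*} [NormedAddCommGroup X] (K : Set X) : Prop :=
  K = ⋂ p ∈ {p : X × ℝ | K ⊆ closedBall p.1 p.2}, closedBall p.1 p.2

/-- The `σ(X,F)` topology on `X`: the topology induced by the functionals in `F`. -/
def sigmaTop {X : Type*} [NormedAddCommGroup X] [NormedSpace ℝ X]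
    (F : Submodule ℝ (X →L[ℝ] ℝ)) : TopologicalSpace X :=
  TopologicalSpace.induced (fun x => fun f : F => (f : X →L[ℝ] ℝ) x) inferInstance

/-- `F` is a norming subspace of `X*`: `‖x‖ = sup {|f x| : f ∈ F, ‖f‖ ≤ 1}`. -/
def IsNorming {X : Type*} [NormedAddCommGroup X] [NormedSpace ℝ X]
    (F : Submodule ℝ (X →L[ℝ] ℝ)) : Prop :=
  ∀ x : X, ‖x‖ = sSup {r : ℝ | ∃ f ∈ F, ‖f‖ ≤ 1 ∧ r = |f x|}

/-- Theorem far, (b) ⟹ (a): under the `F`-MIP, a nonempty σ-closed bounded convex set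
with Property (R) is the σ-closed convex hull of its farthest points. -/
theorem stmt_3 {X : Type*} [NormedAddCommGroup X] [NormedSpace ℝ X] [CompleteSpace X]
    (F : Submodule ℝ (X →L[ℝ] ℝ)) (hF : IsNorming F)
    (hMIP : ∀ K : Set X, @IsClosed X (sigmaTop F) K → Bornology.IsBounded K → Convex ℝ K →
      Admissible K)
    (K : Set X) (hne : K.Nonempty) (hKc : @IsClosed X (sigmaTop F) K)
    (hKb : Bornology.IsBounded K) (hKconv : Convex ℝ K) (hR : PropR K) :
    K = @closure X (sigmaTop F) (convexHull ℝ (farPoints K)) := by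
  letI t : TopologicalSpace X := sigmaTop F
  set ι : X → (F → ℝ) := fun (x : X) (f : F) => f.1 x with hι_def
  have hι_cont : Continuous ι := continuous_induced_dom
  have hf_cont : ∀ f : F, Continuous fun x : X => f.1 x :=
    fun f => (continuous_apply f).comp hι_cont
  have hchar : ∀ (y : X) (r : ℝ), ‖y‖ ≤ r ↔
      ∀ f : F, ‖f.1‖ ≤ 1 → |f.1 y| ≤ r := by
    intro y r
    constructor
    · intro h f hf
      calc |f.1 y| ≤ ‖f.1‖ * ‖y‖ := f.1.le_opNorm y
        _ ≤ 1 * ‖y‖ := by gcongr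
        _ ≤ r := by simpa using h
    · intro h
      rw [hF y]
      refine csSup_le ⟨0, 0, F.zero_mem, by simp⟩ ?_
      rintro s ⟨f, hfF, hf1, rfl⟩
      exact h ⟨f, hfF⟩ hf1
  have hball : ∀ (p : X) (r : ℝ), IsClosed (closedBall p r) := by
    intro p r
    have heq : closedBall p r = ⋂ f : F, ⋂ (_ : ‖f.1‖ ≤ 1),
        {x : X | |f.1 x - f.1 p| ≤ r} := by
      ext x
      simp only [mem_closedBall, dist_eq_norm, mem_iInter, mem_setOf_eq]
      rw [hchar (x - p) r]
      simp [map_sub]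
    rw [heq]
    exact isClosed_iInter fun f => isClosed_iInter fun _ =>
      isClosed_le (((hf_cont f).sub continuous_const).abs) continuous_const
  have hbK : farPoints K ⊆ K := by
    rintro z hz
    obtain ⟨x, -, hzx, -⟩ := mem_iUnion₂.1 hz
    exact hzx
  set S := convexHull ℝ (farPoints K) with hS_def
  have hSK : S ⊆ K := convexHull_min hbK hKconv
  have hMK : closure S ⊆ K := closure_minimal hSK hKc
  obtain ⟨r0, hr0⟩ := hKb.subset_closedBall 0
  have hMb : Bornology.IsBounded (closure S) :=
    (Metric.isBounded_closedBall (x := (0:X)) (r := r0)).subset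
      (closure_minimal (convexHull_min (hbK.trans hr0) (convex_closedBall 0 r0)) (hball 0 r0))
  -- convexity of the σ-closure
  have hcl : closure S = ι ⁻¹' closure (ι '' S) := Set.ext fun x => closure_induced
  have hιlin : Convex ℝ (ι '' S) := by
    have := (convex_convexHull ℝ (farPoints K)).linear_image
      (LinearMap.pi fun f : F => (f.1 : X →ₗ[ℝ] ℝ))
    convert this using 2 <;> rfl
  have hIm : Convex ℝ (closure (ι '' S)) := hιlin.closure
  have hconv : Convex ℝ (closure S) := by
    intro x hx y hy a b ha hb hab
    rw [hcl] at hx hy ⊢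
    have hmap : ι (a • x + b • y) = a • ι x + b • ι y := by
      funext f; simp [hι_def, map_add, map_smul]
    simp only [mem_preimage, hmap]
    exact hIm hx hy ha hb hab
  have hAdm := hMIP (closure S) isClosed_closure hMb hconv
  refine Subset.antisymm ?_ hMK
  intro z hz
  rw [show (@closure X (sigmaTop F) (convexHull ℝ (farPoints K))) = closure S from rfl, hAdm]
  refine mem_iInter₂.2 ?_
  rintro ⟨p, r⟩ hpr
  simp only [mem_setOf_eq] at hpr
  have hbdd : BddAbove ((fun w => ‖w - p‖) '' K) := by
    refine ⟨r0 + ‖p‖, ?_⟩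
    rintro s ⟨w, hw, rfl⟩
    have := hr0 hw
    simp only [mem_closedBall, dist_zero_right] at this
    calc ‖w - p‖ ≤ ‖w‖ + ‖p‖ := norm_sub_le w p
      _ ≤ r0 + ‖p‖ := by linarith
  simp only [mem_closedBall, dist_eq_norm]
  by_contra hlt
  push_neg at hlt
  have hrle : ‖z - p‖ ≤ rFar K p := le_csSup hbdd ⟨z, hz, rfl⟩
  have hα : 0 < rFar K p - r := by linarith
  obtain ⟨w, hwc, hwfar⟩ := hR p (rFar K p - r) hα
  have hwgt : r < ‖w - p‖ := by
    have h2 := hwc.2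
    linarith
  have hwM : w ∈ closedBall p r := hpr (subset_closure (subset_convexHull ℝ _ hwfar))
  rw [mem_closedBall, dist_eq_norm] at hwM
  linarith
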